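/- Let h : ℝⁿ → ℝⁿ be a bi-Lipschitz bijection with h(0) = 0, and let A, B ⊆ ℝⁿ with 0 ∈ closure(A \ {0}) ∩ closure(B \ {0}). Suppose B satisfies condition (SSP). If D(A) ⊆ D(B), then D(h(A)) ⊆ D(h(B)). -/

import Mathlib

open Filter Metric Topology MeasureTheory

noncomputable section

abbrev E (n : ℕ) := EuclideanSpace ℝ (Fin n)

/-- Direction set of `A` at the origin. -/
def Dir (n : ℕ) (A : Set (E n)) : Set (E n) :=
  {a | ‖a‖ = 1 ∧ ∃ x : ℕ → E n, (∀ i, x i ∈ A \ {0}) ∧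
    Tendsto x atTop (nhds (0 : E n)) ∧
    Tendsto (fun i => (‖x i‖)⁻¹ • x i) atTop (nhds a)}

/-- Sea-tangle neighbourhood of degree `d` and width `C`. -/
def STg (n : ℕ) (d C : ℝ) (A : Set (E n)) : Set (E n) :=
  {x | Metric.infDist x A ≤ C * ‖x‖ ^ d}

/-- Cone over the direction set (real tangent cone). -/
def LD (n : ℕ) (A : Set (E n)) : Set (E n) :=
  {x | ∃ a ∈ Dir n A, ∃ t : ℝ, 0 ≤ t ∧ x = t • a}

/-- Sequence selection property. -/
def SSP (n : ℕ) (S : Set (E n)) : Prop :=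
  ∀ a : ℕ → E n, (∀ m, a m ≠ 0) → Tendsto a atTop (nhds (0 : E n)) →
    (∃ L ∈ Dir n S, Tendsto (fun m => (‖a m‖)⁻¹ • a m) atTop (nhds L)) →
    ∀ ε > (0:ℝ), ∃ b : ℕ → E n, (∀ m, b m ∈ S) ∧
      ∀ᶠ m in atTop, ‖a m - b m‖ ≤ ε * min ‖a m‖ ‖b m‖

/-- ST-equivalence of set-germs at the origin. -/
def STEquiv (n : ℕ) (A B : Set (E n)) : Prop :=
  ∃ d₁ > (1:ℝ), ∃ C₁ > (0:ℝ), ∃ d₂ > (1:ℝ), ∃ C₂ > (0:ℝ), ∃ ε > (0:ℝ),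
    B ∩ ball (0 : E n) ε ⊆ STg n d₁ C₁ A ∧ A ∩ ball (0 : E n) ε ⊆ STg n d₂ C₂ B

lemma aux_normalize_dist {n : ℕ} (p q : E n) (hp : p ≠ 0) (hq : q ≠ 0) :
    ‖‖p‖⁻¹ • p - ‖q‖⁻¹ • q‖ ≤ 2 * ‖p - q‖ / ‖q‖ := by
  have hpn : (0:ℝ) < ‖p‖ := norm_pos_iff.mpr hp
  have hqn : (0:ℝ) < ‖q‖ := norm_pos_iff.mpr hq
  have key : ‖p‖⁻¹ • p - ‖q‖⁻¹ • q = (‖p‖⁻¹ - ‖q‖⁻¹) • p + ‖q‖⁻¹ • (p - q) := by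
    rw [sub_smul, smul_sub]; abel
  have habs : |‖p‖ - ‖q‖| ≤ ‖p - q‖ := abs_norm_sub_norm_le p q
  rw [key]
  have h1 : ‖(‖p‖⁻¹ - ‖q‖⁻¹) • p + ‖q‖⁻¹ • (p - q)‖
      ≤ |‖p‖⁻¹ - ‖q‖⁻¹| * ‖p‖ + ‖q‖⁻¹ * ‖p - q‖ := by
    calc ‖(‖p‖⁻¹ - ‖q‖⁻¹) • p + ‖q‖⁻¹ • (p - q)‖
        ≤ ‖(‖p‖⁻¹ - ‖q‖⁻¹) • p‖ + ‖‖q‖⁻¹ • (p - q)‖ := norm_add_le _ _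
      _ = |‖p‖⁻¹ - ‖q‖⁻¹| * ‖p‖ + ‖q‖⁻¹ * ‖p - q‖ := by
          rw [norm_smul, norm_smul, Real.norm_eq_abs, Real.norm_eq_abs,
            abs_of_nonneg (by positivity : (0:ℝ) ≤ ‖q‖⁻¹)]
  refine h1.trans ?_
  have h2 : |‖p‖⁻¹ - ‖q‖⁻¹| * ‖p‖ = |‖q‖ - ‖p‖| / ‖q‖ := by
    rw [show ‖p‖⁻¹ - ‖q‖⁻¹ = (‖q‖ - ‖p‖) / (‖p‖ * ‖q‖) by field_simp,
      abs_div, abs_of_pos (by positivity : (0:ℝ) < ‖p‖ * ‖q‖)]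
    field_simp
  rw [h2]
  have h3 : |‖q‖ - ‖p‖| ≤ ‖p - q‖ := by rw [abs_sub_comm]; exact habs
  have h4 : |‖q‖ - ‖p‖| / ‖q‖ ≤ ‖p - q‖ / ‖q‖ := by gcongr
  have h5 : ‖q‖⁻¹ * ‖p - q‖ = ‖p - q‖ / ‖q‖ := by rw [inv_mul_eq_div]
  have h6 : 2 * ‖p - q‖ / ‖q‖ = ‖p - q‖ / ‖q‖ + ‖p - q‖ / ‖q‖ := by ring
  linarith

lemma mem_Dir_of_approx {n : ℕ} {S : Set (E n)} {v : E n} (hv : ‖v‖ = 1)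
    (H : ∀ ε > (0:ℝ), ∃ z, z ∈ S ∧ z ≠ 0 ∧ ‖z‖ < ε ∧ ‖‖z‖⁻¹ • z - v‖ < ε) :
    v ∈ Dir n S := by
  have pos : ∀ m : ℕ, (0:ℝ) < 1/(m+1) := fun m => by positivity
  choose z hzS hz0 hzn hzv using fun m : ℕ => H (1/(m+1)) (pos m)
  refine ⟨hv, z, fun i => ⟨hzS i, hz0 i⟩, ?_, ?_⟩
  · exact squeeze_zero_norm (fun m => (hzn m).le) tendsto_one_div_add_atTop_nhds_zero_nat
  · rw [tendsto_iff_norm_sub_tendsto_zero]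
    exact squeeze_zero (fun m => norm_nonneg _) (fun m => (hzv m).le)
      tendsto_one_div_add_atTop_nhds_zero_nat

theorem stmt10 (n : ℕ) (h : E n → E n) (hbij : Function.Bijective h) (hh0 : h 0 = 0)
    (K₁ K₂ : ℝ) (hK₁ : 0 < K₁) (hK : K₁ ≤ K₂)
    (hlip : ∀ x y : E n, K₁ * ‖x - y‖ ≤ ‖h x - h y‖ ∧ ‖h x - h y‖ ≤ K₂ * ‖x - y‖)
    (A B : Set (E n)) (hA : (0 : E n) ∈ closure (A \ {0}))
    (hB : (0 : E n) ∈ closure (B \ {0}))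
    (hSSP : SSP n B) (hdir : Dir n A ⊆ Dir n B) :
    Dir n (h '' A) ⊆ Dir n (h '' B) := by
  rintro v ⟨hv1, y, hy, hy0, hyv⟩
  have hK₂ : 0 < K₂ := lt_of_lt_of_le hK₁ hK
  choose x hxA hxy using fun i => (hy i).1
  have hx0 : ∀ i, x i ≠ 0 := by
    intro i hxi
    exact (hy i).2 (by simp [← hxy i, hxi, hh0])
  have hK1x : ∀ i, K₁ * ‖x i‖ ≤ ‖y i‖ := by
    intro i
    have h1 := (hlip (x i) 0).1
    rwa [sub_zero, hh0, sub_zero, hxy i] at h1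
  have hxlim : Tendsto x atTop (𝓝 0) := by
    have hb : ∀ i, ‖x i‖ ≤ ‖y i‖ / K₁ := fun i =>
      (le_div_iff₀ hK₁).mpr (by linarith [hK1x i])
    apply squeeze_zero_norm hb
    have hn : Tendsto (fun i => ‖y i‖) atTop (𝓝 0) := by
      simpa using hy0.norm
    simpa using hn.div_const K₁
  have hsph : ∀ i, (‖x i‖⁻¹ • x i) ∈ sphere (0:E n) 1 := by
    intro i
    rw [mem_sphere_zero_iff_norm, norm_smul, Real.norm_eq_abs,
      abs_of_nonneg (by positivity), inv_mul_cancel₀ (norm_ne_zero_iff.mpr (hx0 i))]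
  obtain ⟨a, haS, φ, hφ, hφa⟩ := (isCompact_sphere (0:E n) 1).tendsto_subseq hsph
  have ha1 : ‖a‖ = 1 := mem_sphere_zero_iff_norm.mp haS
  have haA : a ∈ Dir n A :=
    ⟨ha1, x ∘ φ, fun i => ⟨hxA _, hx0 _⟩, hxlim.comp hφ.tendsto_atTop, hφa⟩
  have haB := hdir haA
  refine mem_Dir_of_approx hv1 ?_
  intro ε hε
  set t := min (1/2 : ℝ) (ε/8) with ht
  have htpos : 0 < t := lt_min (by norm_num) (by linarith)
  have ht2 : t ≤ 1/2 := min_le_left _ _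
  have ht8 : t ≤ ε/8 := min_le_right _ _
  set δ := K₁/K₂ * t with hδ
  have hδpos : 0 < δ := by positivity
  obtain ⟨b, hbB, hev⟩ := hSSP (x ∘ φ) (fun m => hx0 _) (hxlim.comp hφ.tendsto_atTop)
    ⟨a, haB, hφa⟩ δ hδpos
  have h1 : ∀ᶠ m in atTop, ‖‖y (φ m)‖⁻¹ • y (φ m) - v‖ < ε/2 := by
    have h1' := tendsto_iff_norm_sub_tendsto_zero.mp (hyv.comp hφ.tendsto_atTop)
    exact h1'.eventually_lt_const (by linarith)
  have h2 : ∀ᶠ m in atTop, ‖y (φ m)‖ < ε/2 := by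
    have h2' : Tendsto (fun m => ‖y (φ m)‖) atTop (𝓝 0) := by
      simpa using (hy0.comp hφ.tendsto_atTop).norm
    exact h2'.eventually_lt_const (by linarith)
  obtain ⟨m, hm1, hm2, hm3⟩ := (hev.and (h1.and h2)).exists
  set q := y (φ m) with hqdef
  set p := h (b m) with hpdef
  have hq : q = h (x (φ m)) := (hxy (φ m)).symm
  have hq0 : q ≠ 0 := fun h' => (hy (φ m)).2 h'
  have hqn : 0 < ‖q‖ := norm_pos_iff.mpr hq0
  have hbx : ‖b m - x (φ m)‖ ≤ δ * ‖x (φ m)‖ := by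
    rw [norm_sub_rev]
    refine hm1.trans ?_
    exact mul_le_mul_of_nonneg_left (min_le_left _ _) hδpos.le
  have hpq : ‖p - q‖ ≤ t * ‖q‖ := by
    have e1 : ‖p - q‖ ≤ K₂ * ‖b m - x (φ m)‖ := by
      rw [hq]; exact (hlip _ _).2
    have e2 : K₂ * ‖b m - x (φ m)‖ ≤ K₂ * (δ * ‖x (φ m)‖) :=
      mul_le_mul_of_nonneg_left hbx hK₂.le
    have e3 : K₂ * (δ * ‖x (φ m)‖) = t * (K₁ * ‖x (φ m)‖) := by
      rw [hδ]; field_simp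
    have e4 : t * (K₁ * ‖x (φ m)‖) ≤ t * ‖q‖ :=
      mul_le_mul_of_nonneg_left (hK1x (φ m)) htpos.le
    linarith
  have hp0 : p ≠ 0 := by
    intro h'
    rw [h', zero_sub, norm_neg] at hpq
    nlinarith [mul_le_mul_of_nonneg_right ht2 hqn.le]
  refine ⟨p, ⟨b m, hbB m, rfl⟩, hp0, ?_, ?_⟩
  · have hp_le : ‖p‖ ≤ ‖p - q‖ + ‖q‖ := by
      calc ‖p‖ = ‖(p - q) + q‖ := by rw [sub_add_cancel]
        _ ≤ ‖p - q‖ + ‖q‖ := norm_add_le _ _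
    nlinarith [mul_le_mul_of_nonneg_right ht2 hqn.le]
  · have hnd := aux_normalize_dist p q hp0 hq0
    have hbd : 2 * ‖p - q‖ / ‖q‖ ≤ 2 * t := by
      rw [div_le_iff₀ hqn]; nlinarith
    have htri : ‖‖p‖⁻¹ • p - v‖ ≤ ‖‖p‖⁻¹ • p - ‖q‖⁻¹ • q‖ + ‖‖q‖⁻¹ • q - v‖ := by
      have := dist_triangle (‖p‖⁻¹ • p) (‖q‖⁻¹ • q) v
      simpa [dist_eq_norm] using this
    have hm2' : ‖‖q‖⁻¹ • q - v‖ < ε/2 := hm2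
    linarith
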